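/- The Thue-Morse sequence is overlap-free: it contains no factor of the form awawa where a is a single symbol and w is a (possibly empty) word. -/

import Mathlib

open Fin.NatCast in
/-- The Thue-Morse sequence: parity of the number of 1 bits of `n`. -/
def thueMorse (n : ℕ) : Fin 2 := (n.bits.count true : Fin 2)

/-- `w` is the factor of the infinite sequence `s` starting at position `i`. -/
def FactorAt {α : Type*} (s : ℕ → α) (i : ℕ) (w : List α) : Prop :=
  w = (List.range w.length).map (fun j => s (i + j))

/-- `w` is a factor (contiguous finite subword) of the infinite sequence `s`. -/
def IsFactor {α : Type*} (s : ℕ → α) (w : List α) : Prop := ∃ i, FactorAt s i w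

lemma tm_even (n : ℕ) : thueMorse (2 * n) = thueMorse n := by
  rcases eq_or_ne n 0 with rfl | h
  · rfl
  · simp [thueMorse, Nat.bit0_bits n h]

lemma tm_odd (n : ℕ) : thueMorse (2 * n + 1) = thueMorse n + 1 := by
  simp [thueMorse, Nat.bit1_bits n, List.count_cons, Nat.cast_add]
  exact Fin.ext (by simp [Fin.val_add])

lemma fin2_ne_add_one (x : Fin 2) : x ≠ x + 1 := by fin_cases x <;> decide

lemma fin2_add_one_one (x : Fin 2) : x + 1 + 1 = x := by fin_cases x <;> decide

/-- From the period relation at two consecutive even-started positions, two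
consecutive Thue-Morse values agree. -/
lemma tm_key_even (q n : ℕ)
    (h1 : thueMorse (2*n) = thueMorse (2*n + (2*q+1)))
    (h2 : thueMorse (2*n+1) = thueMorse (2*n+1 + (2*q+1))) :
    thueMorse (n+q) = thueMorse (n+q+1) := by
  rw [show 2*n + (2*q+1) = 2*(n+q)+1 by ring, tm_even, tm_odd] at h1
  rw [show 2*n+1 + (2*q+1) = 2*(n+q+1) by ring, tm_odd, tm_even] at h2
  rw [h1] at h2
  rw [← h2, fin2_add_one_one]

lemma tm_key_odd (q n : ℕ)
    (h1 : thueMorse (2*n+1) = thueMorse (2*n+1 + (2*q+1)))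
    (h2 : thueMorse (2*n+2) = thueMorse (2*n+2 + (2*q+1))) :
    thueMorse n = thueMorse (n+1) := by
  rw [show 2*n+1 + (2*q+1) = 2*(n+q+1) by ring, tm_odd, tm_even] at h1
  rw [show 2*n+2 + (2*q+1) = 2*(n+q+1)+1 by ring,
      show 2*n+2 = 2*(n+1) by ring, tm_even, tm_odd] at h2
  rw [← h1] at h2
  rw [h2, fin2_add_one_one]

/-- Thue-Morse has no three consecutive equal values. -/
lemma tm_no_triple (m : ℕ) (h1 : thueMorse m = thueMorse (m+1))
    (h2 : thueMorse (m+1) = thueMorse (m+2)) : False := by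
  rcases Nat.even_or_odd m with ⟨n, hn⟩ | ⟨n, hn⟩
  · subst hn
    rw [show n + n = 2*n by ring, tm_even, tm_odd] at h1
    exact fin2_ne_add_one _ h1
  · subst hn
    rw [show 2*n+1+1 = 2*(n+1) by ring, show 2*n+1+2 = 2*(n+1)+1 by ring,
      tm_even, tm_odd] at h2
    exact fin2_ne_add_one _ h2

/-- Thue-Morse has no overlap: no position `i` and period `p ≥ 1` with
`t(i+j) = t(i+j+p)` for all `j ≤ p`. -/
lemma tm_no_period (p : ℕ) : ∀ i, 1 ≤ p →
    ¬ (∀ j ≤ p, thueMorse (i+j) = thueMorse (i+j+p)) := by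
  induction p using Nat.strong_induction_on with
  | _ p ih =>
    intro i hp h
    rcases Nat.even_or_odd p with ⟨q, hq⟩ | ⟨q, hq⟩
    · -- p = 2q even
      have hq1 : 1 ≤ q := by omega
      rcases Nat.even_or_odd i with ⟨n, hn⟩ | ⟨n, hn⟩
      · refine ih q (by omega) n hq1 (fun j hj => ?_)
        have := h (2*j) (by omega)
        rw [show i + 2*j = 2*(n+j) by omega,
            show 2*(n+j) + p = 2*(n+j+q) by omega, tm_even, tm_even] at this
        exact this
      · refine ih q (by omega) n hq1 (fun j hj => ?_)
        have := h (2*j) (by omega)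
        rw [show i + 2*j = 2*(n+j)+1 by omega,
            show 2*(n+j)+1 + p = 2*(n+j+q)+1 by omega, tm_odd, tm_odd] at this
        exact add_right_cancel this
    · -- p = 2q+1 odd
      rcases Nat.eq_or_lt_of_le hp with hp1 | hp3
      · -- p = 1
        have h0 := h 0 (by omega)
        have h1 := h 1 (by omega)
        rw [← hp1] at h0 h1
        rcases Nat.even_or_odd i with ⟨n, hn⟩ | ⟨n, hn⟩
        · have h0' : thueMorse (2*n) = thueMorse (2*n+1) := by
            rw [show 2*n+1 = i+0+1 by omega, show 2*n = i+0 by omega]; exact h0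
          rw [tm_even, tm_odd] at h0'
          exact fin2_ne_add_one _ h0'
        · have h1' : thueMorse (2*(n+1)) = thueMorse (2*(n+1)+1) := by
            rw [show 2*(n+1)+1 = i+1+1 by omega, show 2*(n+1) = i+1 by omega]; exact h1
          rw [tm_even, tm_odd] at h1'
          exact fin2_ne_add_one _ h1'
      · -- p ≥ 3, so q ≥ 1
        have hq1 : 1 ≤ q := by omega
        have h0 := h 0 (by omega)
        have h1 := h 1 (by omega)
        have h2 := h 2 (by omega)
        have h3 := h 3 (by omega)
        rcases Nat.even_or_odd i with ⟨n, hn⟩ | ⟨n, hn⟩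
        · have k1 := tm_key_even q n
            (by rw [show 2*n + (2*q+1) = i+0+p by omega, show 2*n = i + 0 by omega]; exact h0)
            (by rw [show 2*n+1 + (2*q+1) = i+1+p by omega, show 2*n+1 = i + 1 by omega]; exact h1)
          have k2 := tm_key_even q (n+1)
            (by rw [show 2*(n+1) + (2*q+1) = i+2+p by omega, show 2*(n+1) = i + 2 by omega]; exact h2)
            (by rw [show 2*(n+1)+1 + (2*q+1) = i+3+p by omega, show 2*(n+1)+1 = i + 3 by omega]; exact h3)
          exact tm_no_triple (n+q) k1 (by rw [show n+q+1 = n+1+q by ring, show n+q+2 = n+1+q+1 by ring] at *; exact k2)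
        · have k1 := tm_key_odd q n
            (by rw [show 2*n+1 + (2*q+1) = i+0+p by omega, show 2*n+1 = i + 0 by omega]; exact h0)
            (by rw [show 2*n+2 + (2*q+1) = i+1+p by omega, show 2*n+2 = i + 1 by omega]; exact h1)
          have k2 := tm_key_odd q (n+1)
            (by rw [show 2*(n+1)+1 + (2*q+1) = i+2+p by omega, show 2*(n+1)+1 = i + 2 by omega]; exact h2)
            (by rw [show 2*(n+1)+2 + (2*q+1) = i+3+p by omega, show 2*(n+1)+2 = i + 3 by omega]; exact h3)
          exact tm_no_triple n k1 k2


/-- the Thue–Morse sequence is overlap-free: it contains no factor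
of the form `a·w·a·w·a` with `a` a single symbol and `w` a (possibly empty) word. -/
theorem thueMorse_overlapFree :
    ¬ ∃ (a : Fin 2) (w : List (Fin 2)),
      IsFactor thueMorse ([a] ++ w ++ [a] ++ w ++ [a]) := by
  rintro ⟨a, w, i, hfac⟩
  set p := w.length + 1 with hpdef
  set L := [a] ++ w ++ [a] ++ w ++ [a] with hLdef
  have hLlen : L.length = 2*p + 1 := by simp [hLdef, hpdef]; ring
  have hfac' : L = (List.range L.length).map (fun j => thueMorse (i + j)) := hfac
  have hget : ∀ j (hlt : j < L.length), L[j] = thueMorse (i+j) := by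
    intro j hlt
    rw [List.getElem_of_eq hfac' hlt]
    simp
  have hL2 : L = (a::w) ++ ((a::w) ++ [a]) := by simp [hLdef]
  refine tm_no_period p i (by omega) (fun j hj => ?_)
  have hj1 : j < L.length := by omega
  have hj2 : j + p < L.length := by omega
  rw [Nat.add_assoc, ← hget j hj1, ← hget (j+p) (by omega)]
  have hulen : (a::w).length = p := by simp [hpdef]
  have right : L[j+p]'hj2 = ((a::w) ++ [a])[j]'(by simp <;> omega) := by
    rw [List.getElem_of_eq hL2 hj2]
    rw [List.getElem_append_right (by simp <;> omega)]
    congr 1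
    simp <;> omega
  rw [right]
  rcases Nat.lt_or_ge j p with hlt | hge
  · -- j < p : both sides are (a::w)[j]
    have e1 : L[j]'hj1 = (a::w)[j]'(by simp <;> omega) := by
      rw [List.getElem_of_eq hL2 hj1]
      rw [List.getElem_append_left (by simp <;> omega)]
    have e2 : ((a::w) ++ [a])[j]'(by simp <;> omega) = (a::w)[j]'(by simp <;> omega) := by
      rw [List.getElem_append_left (by simp <;> omega)]
    rw [e1, e2]
  · -- j = p
    have hjp : j = p := by omega
    subst hjp
    have e1 : L[p]'hj1 = a := by
      rw [List.getElem_of_eq hL2 hj1]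
      rw [List.getElem_append_right (by simp <;> omega)]
      simp [hulen]
    have e2 : ((a::w) ++ [a])[p]'(by simp <;> omega) = a := by
      rw [List.getElem_append_right (by simp <;> omega)]
      simp [hulen]
    rw [e1, e2]
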